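/- For weighted automata 𝒜 and ℬ over A and S and scalars α, β, γ, δ ∈ S, the diverging behavior of α𝒜γ + βℬδ equals the pointwise combination of the diverging behaviors: for every infinite word w and every n ∈ ℕ, (α𝒜γ + βℬδ)(w,n) = α·𝒜(w,n)·γ + β·ℬ(w,n)·δ. -/

import Mathlib

open scoped Classical

/-- A weighted automaton over alphabet `A` and semiring `S`: a finite set of
states `Q`, initial distribution `I`, final distribution `F`, and a transition
matrix `M a` for each letter `a`. -/
structure WA (A : Type) (S : Type) [Semiring S] where
  Q : Type
  [fin : Fintype Q]
  [deq : DecidableEq Q]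
  I : Q → S
  F : Q → S
  M : A → Matrix Q Q S

attribute [instance] WA.fin WA.deq

variable {A S : Type} [Semiring S]

/-- The product `M(a₀)·…·M(a_{n−1})` over a finite word (identity for `[]`). -/
def Mword (𝒜 : WA A S) (w : List A) : Matrix 𝒜.Q 𝒜.Q S :=
  (w.map 𝒜.M).prod

/-- The converging behavior `⟦𝒜⟧(w) = Σ_{i,f} I(i)·M(w)_{i,f}·F(f)`. -/
def convB (𝒜 : WA A S) (w : List A) : S :=
  ∑ i, ∑ f, 𝒜.I i * Mword 𝒜 w i f * 𝒜.F f

/-- The first `n` letters of an infinite word. -/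
def wpre (w : ℕ → A) (n : ℕ) : List A := (List.range n).map w

/-- A pair of states `(i,f)` is activated by the infinite word `w` if for
every `n₀` there is `n ≥ n₀` with `M(w[0..n))_{i,f} ≠ 0`. -/
def Activated (𝒜 : WA A S) (w : ℕ → A) (i f : 𝒜.Q) : Prop :=
  ∀ n₀ : ℕ, ∃ n, n₀ ≤ n ∧ Mword 𝒜 (wpre w n) i f ≠ 0

/-- The diverging behavior `𝒜(w,n) = Σ_{(i,f) activated} I(i)·M(w[0..n))_{i,f}·F(f)`. -/
noncomputable def divB (𝒜 : WA A S) (w : ℕ → A) (n : ℕ) : S :=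
  ∑ p : 𝒜.Q × 𝒜.Q,
    if Activated 𝒜 w p.1 p.2 then
      𝒜.I p.1 * Mword 𝒜 (wpre w n) p.1 p.2 * 𝒜.F p.2
    else 0

/-- Product of converging power series: sum over all splittings of the word. -/
def cmul (x y : List A → S) : List A → S :=
  fun w => ∑ k ∈ Finset.range (w.length + 1), x (w.take k) * y (w.drop k)

/-- The multiplicative unit: 1 on the empty word, 0 elsewhere. -/
def cone : List A → S := fun w => match w with | [] => 1 | _ => 0

/-- Powers of a converging power series. -/
def cpow (x : List A → S) : ℕ → (List A → S)
  | 0 => cone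
  | n + 1 => cmul x (cpow x n)

/-- The star `x* = Σ_{k ≥ 0} x^k`; for proper `x` only the terms with
`k ≤ |w|` can contribute on the word `w`. -/
def cstar (x : List A → S) : List A → S :=
  fun w => ∑ k ∈ Finset.range (w.length + 1), cpow x k w

/-- `Rat*(S,A)`: the smallest set of converging power series containing all
finitely supported ones and closed under sum, product, and star of proper
members. -/
inductive IsRat : (List A → S) → Prop
  | finite (x : List A → S) (h : (Function.support x).Finite) : IsRat x
  | add {x y : List A → S} : IsRat x → IsRat y → IsRat (x + y)
  | mul {x y : List A → S} : IsRat x → IsRat y → IsRat (cmul x y)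
  | star {x : List A → S} : IsRat x → x [] = 0 → IsRat (cstar x)

/-- `χ(w,x) = 1` iff arbitrarily long prefixes of `w` have nonzero coefficient. -/
noncomputable def chi (w : ℕ → A) (x : List A → S) : S :=
  if ∀ n₀ : ℕ, ∃ n, n₀ ≤ n ∧ x (wpre w n) ≠ 0 then 1 else 0

/-- `s^ω(w,n) = s*(w[0..n))·χ(w,s*)`. -/
noncomputable def omegaPS (s : List A → S) : (ℕ → A) → ℕ → S :=
  fun w n => cstar s (wpre w n) * chi w (cstar s)

/-- The conjoin `(x ⋆ y)(w,n) = (x·y*)(w[0..n))·χ(w,x·y*)`. -/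
noncomputable def conjoinPS (x y : List A → S) : (ℕ → A) → ℕ → S :=
  fun w n => cmul x (cstar y) (wpre w n) * chi w (cmul x (cstar y))

/-- `Rat^ω(S,A)`: the smallest set of diverging power series closed under
finite sums and left/right scalar multiplication containing all `x ⋆ y` and
`z^ω` for proper rational `x`, `y`, `z`. -/
inductive IsRatOmega : ((ℕ → A) → ℕ → S) → Prop
  | zero : IsRatOmega (fun _ _ => 0)
  | add {p q : (ℕ → A) → ℕ → S} :
      IsRatOmega p → IsRatOmega q → IsRatOmega (fun w n => p w n + q w n)
  | smul_left (s : S) {p : (ℕ → A) → ℕ → S} :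
      IsRatOmega p → IsRatOmega (fun w n => s * p w n)
  | smul_right (s : S) {p : (ℕ → A) → ℕ → S} :
      IsRatOmega p → IsRatOmega (fun w n => p w n * s)
  | conjoin {x y : List A → S} :
      IsRat x → x [] = 0 → IsRat y → y [] = 0 → IsRatOmega (conjoinPS x y)
  | omega {z : List A → S} : IsRat z → z [] = 0 → IsRatOmega (omegaPS z)

/-- Scalar multiples `l·𝒜·r` of an automaton. -/
def smulWA (l : S) (𝒜 : WA A S) (r : S) : WA A S where
  Q := 𝒜.Q
  I := fun i => l * 𝒜.I i
  F := fun f => 𝒜.F f * r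
  M := 𝒜.M

/-- The disjoint-union (sum) automaton. -/
def addWA (𝒜 ℬ : WA A S) : WA A S where
  Q := 𝒜.Q ⊕ ℬ.Q
  I := Sum.elim 𝒜.I ℬ.I
  F := Sum.elim 𝒜.F ℬ.F
  M := fun a => Matrix.fromBlocks (𝒜.M a) 0 0 (ℬ.M a)

/-- `𝒜` is normalized with initial state `qI` and final state `qF`. -/
def IsNormalizedAt (𝒜 : WA A S) (qI qF : 𝒜.Q) : Prop :=
  qI ≠ qF ∧ (∀ i, 𝒜.I i = if i = qI then 1 else 0) ∧
    (∀ f, 𝒜.F f = if f = qF then 1 else 0) ∧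
    (∀ (a : A) (i : 𝒜.Q), 𝒜.M a i qI = 0) ∧ (∀ (a : A) (j : 𝒜.Q), 𝒜.M a qF j = 0)

/-- `𝒜` is normalized. -/
def IsNormalized (𝒜 : WA A S) : Prop := ∃ qI qF, IsNormalizedAt 𝒜 qI qF

/-- `𝒜` is a loopback automaton with loopback state `q₀`. -/
def IsLoopbackAt (𝒜 : WA A S) (q₀ : 𝒜.Q) : Prop :=
  (∀ i, 𝒜.I i = if i = q₀ then 1 else 0) ∧ (∀ f, 𝒜.F f = if f = q₀ then 1 else 0)

/-- `𝒜` is a loopback automaton. -/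
def IsLoopback (𝒜 : WA A S) : Prop := ∃ q₀, IsLoopbackAt 𝒜 q₀

/-- `𝒜` is a loopback automaton with prelude. -/
def IsLoopbackWithPrelude (𝒜 : WA A S) : Prop :=
  ∃ qI qF, qI ≠ qF ∧ (∀ i, 𝒜.I i = if i = qI then 1 else 0) ∧
    (∀ f, 𝒜.F f = if f = qF then 1 else 0) ∧
    (∀ (a : A) (i : 𝒜.Q), 𝒜.M a i qI = 0)

/-- `𝒜` is a bridge automaton. -/
def IsBridge (𝒜 : WA A S) : Prop :=
  ∃ qI qF, qI ≠ qF ∧ (∀ i, 𝒜.I i = if i = qI then 1 else 0) ∧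
    (∀ f, 𝒜.F f = if f = qF then 1 else 0)

/-- The unroll of a loopback automaton with loopback state `q₀`: adjoin a
fresh final state, redirect all edges ending at `q₀` to it. -/
def unroll (L : WA A S) (q₀ : L.Q) : WA A S where
  Q := L.Q ⊕ Unit
  I := Sum.elim (fun i => if i = q₀ then 1 else 0) (fun _ => 0)
  F := Sum.elim (fun _ => 0) (fun _ => 1)
  M := fun a => Matrix.of fun p q =>
    match p, q with
    | Sum.inl i, Sum.inl j => if j = q₀ then 0 else L.M a i j
    | Sum.inl i, Sum.inr _ => L.M a i q₀
    | Sum.inr _, _ => 0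

/-- The conjoin `X ⋆ Y` of two normalized automata (initial/final states
`xI`, `xF` and `yI`, `yF`): the disjoint sum of `X` minus its final state and
the roll of `Y`, with edges of `X` ending at `xF` redirected to the loopback
state `yI`. -/
def conjoinWA (X : WA A S) (xI xF : X.Q) (Y : WA A S) (yI yF : Y.Q) : WA A S where
  Q := {i : X.Q // i ≠ xF} ⊕ {j : Y.Q // j ≠ yF}
  I := Sum.elim (fun i => if i.1 = xI then 1 else 0) (fun _ => 0)
  F := Sum.elim (fun _ => 0) (fun j => if j.1 = yI then 1 else 0)
  M := fun a => Matrix.of fun p q =>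
    match p, q with
    | Sum.inl i, Sum.inl j => X.M a i.1 j.1
    | Sum.inl i, Sum.inr j => if j.1 = yI then X.M a i.1 xF else 0
    | Sum.inr _, Sum.inl _ => 0
    | Sum.inr i, Sum.inr j => if j.1 = yI then Y.M a i.1 yF else Y.M a i.1 j.1

/-- The finite slice `w[i..j)` of a biinfinite word. -/
def bpre (w : ℤ → A) (i j : ℤ) : List A :=
  (List.range (j - i).toNat).map (fun k => w (i + k))

/-- A pair of states `(p,q)` is activated by the biinfinite word `w` if for
all `i₀ ≤ j₀` there are `i ≤ i₀` and `j ≥ j₀` with `M(w[i..j))_{p,q} ≠ 0`. -/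
def BActivated (𝒜 : WA A S) (w : ℤ → A) (p q : 𝒜.Q) : Prop :=
  ∀ i₀ j₀ : ℤ, i₀ ≤ j₀ → ∃ i ≤ i₀, ∃ j, j₀ ≤ j ∧ Mword 𝒜 (bpre w i j) p q ≠ 0

/-- The bidiverging behavior
`𝒜(w,i,n) = Σ_{(p,q) activated} I(p)·M(w[i..i+n))_{p,q}·F(q)`. -/
noncomputable def bdivB (𝒜 : WA A S) (w : ℤ → A) (i : ℤ) (n : ℕ) : S :=
  ∑ p : 𝒜.Q × 𝒜.Q,
    if BActivated 𝒜 w p.1 p.2 then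
      𝒜.I p.1 * Mword 𝒜 (bpre w i (i + n)) p.1 p.2 * 𝒜.F p.2
    else 0

/-- `χ_ζ(w,x) = 1` iff arbitrarily long slices of `w` have nonzero coefficient. -/
noncomputable def chiZ (w : ℤ → A) (x : List A → S) : S :=
  if ∀ i₀ j₀ : ℤ, i₀ ≤ j₀ → ∃ i ≤ i₀, ∃ j, j₀ ≤ j ∧ x (bpre w i j) ≠ 0 then 1 else 0

/-- `s^ζ(w,i,n) = s*(w[i..i+n))·χ_ζ(w,s*)`. -/
noncomputable def zetaPS (s : List A → S) : (ℤ → A) → ℤ → ℕ → S :=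
  fun w i n => cstar s (bpre w i (i + n)) * chiZ w (cstar s)

/-- The conjoin `(x ⋆ m ⋆ y)(w,i,n) = (x*·m·y*)(w[i..i+n))·χ_ζ(w,x*·m·y*)`. -/
noncomputable def conjoin3PS (x m y : List A → S) : (ℤ → A) → ℤ → ℕ → S :=
  fun w i n =>
    cmul (cstar x) (cmul m (cstar y)) (bpre w i (i + n)) *
      chiZ w (cmul (cstar x) (cmul m (cstar y)))

/-- `Rat^ζ(S,A)`: the smallest set of bidiverging power series closed under
finite sums and left/right scalar multiplication containing all `x ⋆ m ⋆ y`
and `z^ζ` for proper rational `x`, `m`, `y`, `z`. -/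
inductive IsRatZeta : ((ℤ → A) → ℤ → ℕ → S) → Prop
  | zero : IsRatZeta (fun _ _ _ => 0)
  | add {p q : (ℤ → A) → ℤ → ℕ → S} :
      IsRatZeta p → IsRatZeta q → IsRatZeta (fun w i n => p w i n + q w i n)
  | smul_left (s : S) {p : (ℤ → A) → ℤ → ℕ → S} :
      IsRatZeta p → IsRatZeta (fun w i n => s * p w i n)
  | smul_right (s : S) {p : (ℤ → A) → ℤ → ℕ → S} :
      IsRatZeta p → IsRatZeta (fun w i n => p w i n * s)
  | conjoin {x m y : List A → S} :
      IsRat x → x [] = 0 → IsRat m → m [] = 0 → IsRat y → y [] = 0 →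
      IsRatZeta (conjoin3PS x m y)
  | zeta {z : List A → S} : IsRat z → z [] = 0 → IsRatZeta (zetaPS z)

/-- The conjoin `X ⋆ M̂ ⋆ Y` of three normalized automata: the roll of `X`
(loopback `xI`), the middle of `M̂`, and the roll of `Y` (loopback `yI`), with
the edges of `M̂` leaving `mI` re-sourced at `xI`, the edges of `M̂` entering
`mF` re-targeted at `yI`, and direct `mI → mF` edges becoming `xI → yI`. -/
def conjoin3WA (X : WA A S) (xI xF : X.Q) (Mh : WA A S) (mI mF : Mh.Q)
    (Y : WA A S) (yI yF : Y.Q) : WA A S where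
  Q := {i : X.Q // i ≠ xF} ⊕ ({k : Mh.Q // k ≠ mI ∧ k ≠ mF} ⊕ {j : Y.Q // j ≠ yF})
  I := Sum.elim (fun i => if i.1 = xI then 1 else 0) (fun _ => 0)
  F := Sum.elim (fun _ => 0) (Sum.elim (fun _ => 0) (fun j => if j.1 = yI then 1 else 0))
  M := fun a => Matrix.of fun p q =>
    match p, q with
    | Sum.inl i, Sum.inl j => if j.1 = xI then X.M a i.1 xF else X.M a i.1 j.1
    | Sum.inl i, Sum.inr (Sum.inl k) => if i.1 = xI then Mh.M a mI k.1 else 0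
    | Sum.inl i, Sum.inr (Sum.inr j) =>
        if i.1 = xI ∧ j.1 = yI then Mh.M a mI mF else 0
    | Sum.inr (Sum.inl _), Sum.inl _ => 0
    | Sum.inr (Sum.inl k), Sum.inr (Sum.inl l) => Mh.M a k.1 l.1
    | Sum.inr (Sum.inl k), Sum.inr (Sum.inr j) => if j.1 = yI then Mh.M a k.1 mF else 0
    | Sum.inr (Sum.inr _), Sum.inl _ => 0
    | Sum.inr (Sum.inr _), Sum.inr (Sum.inl _) => 0
    | Sum.inr (Sum.inr i), Sum.inr (Sum.inr j) =>
        if j.1 = yI then Y.M a i.1 yF else Y.M a i.1 j.1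

lemma prod_fromBlocks {Q1 Q2 : Type} [Fintype Q1] [Fintype Q2]
    [DecidableEq Q1] [DecidableEq Q2]
    (f : A → Matrix Q1 Q1 S) (g : A → Matrix Q2 Q2 S) (w : List A) :
    ((w.map fun a => Matrix.fromBlocks (f a) 0 0 (g a)).prod)
      = Matrix.fromBlocks ((w.map f).prod) 0 0 ((w.map g).prod) := by
  induction w with
  | nil => simp [Matrix.fromBlocks_one]
  | cons a w ih =>
    simp only [List.map_cons, List.prod_cons, ih, Matrix.fromBlocks_multiply]
    simp

lemma Mword_addWA (𝒜 ℬ : WA A S) (w : List A) :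
    Mword (addWA 𝒜 ℬ) w
      = Matrix.fromBlocks (Mword 𝒜 w) 0 0 (Mword ℬ w) :=
  prod_fromBlocks 𝒜.M ℬ.M w

lemma divB_addWA (𝒜 ℬ : WA A S) (w : ℕ → A) (n : ℕ) :
    divB (addWA 𝒜 ℬ) w n = divB 𝒜 w n + divB ℬ w n := by
  have hM : ∀ u : List A, Mword (addWA 𝒜 ℬ) u
      = Matrix.fromBlocks (Mword 𝒜 u) 0 0 (Mword ℬ u) := Mword_addWA 𝒜 ℬ
  have key : divB (addWA 𝒜 ℬ) w n
      = ∑ p : (𝒜.Q ⊕ ℬ.Q) × (𝒜.Q ⊕ ℬ.Q),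
          (if Activated (addWA 𝒜 ℬ) w p.1 p.2 then
            (addWA 𝒜 ℬ).I p.1 * Mword (addWA 𝒜 ℬ) (wpre w n) p.1 p.2
              * (addWA 𝒜 ℬ).F p.2
          else 0) :=
    (Fintype.sum_equiv
      (Equiv.refl ((𝒜.Q ⊕ ℬ.Q) × (𝒜.Q ⊕ ℬ.Q)) :
        ((𝒜.Q ⊕ ℬ.Q) × (𝒜.Q ⊕ ℬ.Q)) ≃ ((addWA 𝒜 ℬ).Q × (addWA 𝒜 ℬ).Q))
      _ _ (fun _ => rfl)).symm
  rw [key]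
  have hActll : ∀ i f, Activated (addWA 𝒜 ℬ) w (Sum.inl i) (Sum.inl f)
      ↔ Activated 𝒜 w i f := by
    intro i f; unfold Activated; simp only [hM]; rfl
  have hActrr : ∀ i f, Activated (addWA 𝒜 ℬ) w (Sum.inr i) (Sum.inr f)
      ↔ Activated ℬ w i f := by
    intro i f; unfold Activated; simp only [hM]; rfl
  have hActlr : ∀ i f, ¬ Activated (addWA 𝒜 ℬ) w (Sum.inl i) (Sum.inr f) := by
    intro i f h
    obtain ⟨m, -, hne⟩ := h 0
    exact hne (by simp [hM])
  have hActrl : ∀ i f, ¬ Activated (addWA 𝒜 ℬ) w (Sum.inr i) (Sum.inl f) := by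
    intro i f h
    obtain ⟨m, -, hne⟩ := h 0
    exact hne (by simp [hM])
  rw [Fintype.sum_prod_type, Fintype.sum_sum_type]
  simp only [Fintype.sum_sum_type]
  have e1 : ∀ (i f : 𝒜.Q),
      (if Activated (addWA 𝒜 ℬ) w (Sum.inl i) (Sum.inl f) then
        (addWA 𝒜 ℬ).I (Sum.inl i)
          * Mword (addWA 𝒜 ℬ) (wpre w n) (Sum.inl i) (Sum.inl f)
          * (addWA 𝒜 ℬ).F (Sum.inl f)
      else 0)
      = (if Activated 𝒜 w i f then 𝒜.I i * Mword 𝒜 (wpre w n) i f * 𝒜.F f else 0) := by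
    intro i f
    rw [hActll]
    by_cases h : Activated 𝒜 w i f
    · simp only [h, if_pos, hM]; rfl
    · simp [h]
  have e2 : ∀ (i f : ℬ.Q),
      (if Activated (addWA 𝒜 ℬ) w (Sum.inr i) (Sum.inr f) then
        (addWA 𝒜 ℬ).I (Sum.inr i)
          * Mword (addWA 𝒜 ℬ) (wpre w n) (Sum.inr i) (Sum.inr f)
          * (addWA 𝒜 ℬ).F (Sum.inr f)
      else 0)
      = (if Activated ℬ w i f then ℬ.I i * Mword ℬ (wpre w n) i f * ℬ.F f else 0) := by
    intro i f
    rw [hActrr]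
    by_cases h : Activated ℬ w i f
    · simp only [h, if_pos, hM]; rfl
    · simp [h]
  simp only [e1, e2]
  have z1 : ∀ (i : 𝒜.Q) (f : ℬ.Q),
      (if Activated (addWA 𝒜 ℬ) w (Sum.inl i) (Sum.inr f) then
        (addWA 𝒜 ℬ).I (Sum.inl i)
          * Mword (addWA 𝒜 ℬ) (wpre w n) (Sum.inl i) (Sum.inr f)
          * (addWA 𝒜 ℬ).F (Sum.inr f)
      else 0) = 0 := fun i f => if_neg (hActlr i f)
  have z2 : ∀ (i : ℬ.Q) (f : 𝒜.Q),
      (if Activated (addWA 𝒜 ℬ) w (Sum.inr i) (Sum.inl f) then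
        (addWA 𝒜 ℬ).I (Sum.inr i)
          * Mword (addWA 𝒜 ℬ) (wpre w n) (Sum.inr i) (Sum.inl f)
          * (addWA 𝒜 ℬ).F (Sum.inl f)
      else 0) = 0 := fun i f => if_neg (hActrl i f)
  simp only [z1, z2, Finset.sum_const_zero, add_zero, zero_add]
  unfold divB
  rw [Fintype.sum_prod_type, Fintype.sum_prod_type]

lemma divB_smulWA (l : S) (𝒜 : WA A S) (r : S) (w : ℕ → A) (n : ℕ) :
    divB (smulWA l 𝒜 r) w n = l * divB 𝒜 w n * r := by
  have hAct : ∀ i f : 𝒜.Q, Activated (smulWA l 𝒜 r) w i f ↔ Activated 𝒜 w i f :=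
    fun i f => Iff.rfl
  unfold divB
  rw [Finset.mul_sum, Finset.sum_mul]
  refine Finset.sum_congr rfl fun p _ => ?_
  change (if Activated 𝒜 w p.1 p.2 then _ else _) = _
  by_cases h : Activated 𝒜 w p.1 p.2
  · simp only [h, if_pos]
    show l * 𝒜.I p.1 * Mword 𝒜 (wpre w n) p.1 p.2 * (𝒜.F p.2 * r) = _
    simp only [mul_assoc]
  · simp [h]

/-- the diverging behavior is a bimodule homomorphism. -/
theorem divB_is_homomorphism (A S : Type) [Semiring S] (𝒜 ℬ : WA A S)
    (α β γ δ : S) :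
    ∀ (w : ℕ → A) (n : ℕ),
      divB (addWA (smulWA α 𝒜 γ) (smulWA β ℬ δ)) w n
        = α * divB 𝒜 w n * γ + β * divB ℬ w n * δ := by
  intro w n
  rw [divB_addWA, divB_smulWA, divB_smulWA]
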